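/- Let f : [a,b] ⊆ [0,∞) → [0,∞) be continuous and convex, 0 ≤ a < b, and p > 0. Then ∫_a^b (x-a)^p (b-x)^p f(x) f(a+b-x) dx ≤ (b-a)^{2p+1} { (f(a)^2+f(b)^2) B(p+1,p+3) + 2 f(a) f(b) B(p+2,p+2) }. -/

import Mathlib

open MeasureTheory Set

noncomputable def eulerBeta (m n : ℝ) : ℝ := ∫ t in (0:ℝ)..1, t ^ (m - 1) * (1 - t) ^ (n - 1)

lemma contOn_pow (q r : ℝ) (hq : 0 ≤ q) (hr : 0 ≤ r) :
    ContinuousOn (fun t : ℝ => t ^ q * (1 - t) ^ r) (Icc (0:ℝ) 1) :=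
  (continuousOn_id.rpow_const fun _ _ => Or.inr hq).mul
    (((continuous_const.sub continuous_id).continuousOn).rpow_const fun _ _ => Or.inr hr)

lemma intble (q r : ℝ) (hq : 0 ≤ q) (hr : 0 ≤ r) :
    IntervalIntegrable (fun t : ℝ => t ^ q * (1 - t) ^ r) volume 0 1 :=
  ContinuousOn.intervalIntegrable (by rw [uIcc_of_le zero_le_one]; exact contOn_pow q r hq hr)

lemma symm_int (q r : ℝ) :
    (∫ t in (0:ℝ)..1, t ^ q * (1 - t) ^ r) = ∫ t in (0:ℝ)..1, t ^ r * (1 - t) ^ q := by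
  have h := intervalIntegral.integral_comp_sub_left
    (fun t : ℝ => t ^ q * (1 - t) ^ r) 1 (a := 0) (b := 1)
  simp only [sub_sub_cancel, sub_zero, sub_self] at h
  rw [← h]
  congr 1; ext t; ring

theorem cor_2_4 (f : ℝ → ℝ) (a b : ℝ) (ha : 0 ≤ a) (hab : a < b)
    (hf : ContinuousOn f (Icc a b)) (hnn : ∀ x ∈ Icc a b, 0 ≤ f x)
    (hconv : ConvexOn ℝ (Icc a b) f)
    (p : ℝ) (hp : 0 < p) :
    ∫ x in a..b, (x - a) ^ p * (b - x) ^ p * (f x * f (a + b - x)) ≤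
      (b - a) ^ (2 * p + 1) *
        ((f a ^ 2 + f b ^ 2) * eulerBeta (p + 1) (p + 3) +
          2 * f a * f b * eulerBeta (p + 2) (p + 2)) := by
  have hL : (0:ℝ) < b - a := sub_pos.mpr hab
  have haI : a ∈ Icc a b := left_mem_Icc.mpr hab.le
  have hbI : b ∈ Icc a b := right_mem_Icc.mpr hab.le
  have hA0 : 0 ≤ f a := hnn a haI
  have hB0 : 0 ≤ f b := hnn b hbI
  set G : ℝ → ℝ := fun x => (x - a) ^ p * (b - x) ^ p * (f x * f (a + b - x)) with hG
  set Hc : ℝ → ℝ := fun t => (b - a) ^ (2*p) *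
      (t ^ p * (1-t) ^ p * ((t^2 + (1-t)^2) * (f a ^ 2 + f b ^ 2) / 2
        + 2 * (t * (1-t)) * (f a * f b))) with hHc
  -- change of variables
  have hcov : (∫ x in a..b, G x) = (b - a) * ∫ t in (0:ℝ)..1, G ((b-a)*t + a) := by
    rw [intervalIntegral.integral_comp_mul_add G (ne_of_gt hL) a]
    simp only [mul_zero, zero_add, mul_one, sub_add_cancel, smul_eq_mul]
    rw [← mul_assoc, mul_inv_cancel₀ (ne_of_gt hL), one_mul]
  -- pointwise bound
  have key : ∀ t ∈ Icc (0:ℝ) 1, G ((b-a)*t + a) ≤ Hc t := by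
    intro t ht
    obtain ⟨ht0, ht1⟩ := ht
    have h1t : (0:ℝ) ≤ 1 - t := by linarith
    have hxmem : (b-a)*t + a ∈ Icc a b := ⟨by nlinarith, by nlinarith⟩
    have hymem : a + b - ((b-a)*t + a) ∈ Icc a b := ⟨by nlinarith, by nlinarith⟩
    have hfx : f ((b-a)*t + a) ≤ (1-t) * f a + t * f b := by
      have h := hconv.2 haI hbI h1t ht0 (by ring)
      simp only [smul_eq_mul] at h
      rwa [show (1-t)*a + t*b = (b-a)*t + a by ring] at h
    have hfy : f (a + b - ((b-a)*t + a)) ≤ t * f a + (1-t) * f b := by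
      have h := hconv.2 haI hbI ht0 h1t (by ring)
      simp only [smul_eq_mul] at h
      rwa [show t*a + (1-t)*b = a + b - ((b-a)*t + a) by ring] at h
    have hprod : f ((b-a)*t + a) * f (a + b - ((b-a)*t + a)) ≤
        ((1-t) * f a + t * f b) * (t * f a + (1-t) * f b) :=
      mul_le_mul hfx hfy (hnn _ hymem)
        (add_nonneg (mul_nonneg h1t hA0) (mul_nonneg ht0 hB0))
    have hbound : ((1-t) * f a + t * f b) * (t * f a + (1-t) * f b) ≤
        (t^2 + (1-t)^2) * (f a ^ 2 + f b ^ 2) / 2 + 2 * (t * (1-t)) * (f a * f b) := by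
      nlinarith [sq_nonneg ((2*t - 1) * (f a - f b))]
    have expand : G ((b-a)*t + a) = (b-a)^(2*p) * (t^p * (1-t)^p) *
        (f ((b-a)*t + a) * f (a + b - ((b-a)*t + a))) := by
      simp only [hG]
      rw [show ((b-a)*t + a) - a = (b-a)*t by ring,
          show b - ((b-a)*t + a) = (b-a)*(1-t) by ring,
          Real.mul_rpow hL.le ht0, Real.mul_rpow hL.le h1t,
          show (2:ℝ)*p = p + p by ring, Real.rpow_add hL]
      ring
    rw [expand, hHc]
    have hw : (0:ℝ) ≤ (b-a)^(2*p) * (t^p * (1-t)^p) :=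
      mul_nonneg (Real.rpow_nonneg hL.le _)
        (mul_nonneg (Real.rpow_nonneg ht0 _) (Real.rpow_nonneg h1t _))
    calc (b-a)^(2*p) * (t^p * (1-t)^p) *
        (f ((b-a)*t + a) * f (a + b - ((b-a)*t + a)))
        ≤ (b-a)^(2*p) * (t^p * (1-t)^p) *
          ((t^2 + (1-t)^2) * (f a ^ 2 + f b ^ 2) / 2 + 2 * (t * (1-t)) * (f a * f b)) :=
          mul_le_mul_of_nonneg_left (hprod.trans hbound) hw
      _ = (b - a) ^ (2*p) * (t ^ p * (1-t) ^ p * ((t^2 + (1-t)^2) * (f a ^ 2 + f b ^ 2) / 2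
            + 2 * (t * (1-t)) * (f a * f b))) := by ring
  -- integrability
  have hmaps : ∀ x ∈ Icc a b, a + b - x ∈ Icc a b := fun x hx =>
    ⟨by linarith [hx.2], by linarith [hx.1]⟩
  have hGcont : ContinuousOn G (Icc a b) := by
    refine (ContinuousOn.mul (ContinuousOn.mul ?_ ?_) ?_)
    · exact ((continuous_id.sub continuous_const).continuousOn).rpow_const fun _ _ => Or.inr hp.le
    · exact ((continuous_const.sub continuous_id).continuousOn).rpow_const fun _ _ => Or.inr hp.le
    · exact hf.mul (hf.comp ((continuous_const.sub continuous_id).continuousOn) hmaps)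
  have hint1 : IntervalIntegrable (fun t => G ((b-a)*t + a)) volume 0 1 := by
    apply ContinuousOn.intervalIntegrable
    rw [uIcc_of_le zero_le_one]
    apply hGcont.comp (((continuous_const.mul continuous_id).add continuous_const).continuousOn)
    intro t ht
    show (b-a)*t + a ∈ Icc a b
    exact ⟨by nlinarith [mul_nonneg hL.le ht.1],
      by nlinarith [mul_nonneg hL.le (sub_nonneg.mpr ht.2)]⟩
  have hint2 : IntervalIntegrable Hc volume 0 1 := by
    apply ContinuousOn.intervalIntegrable
    rw [uIcc_of_le zero_le_one]
    exact continuousOn_const.mul ((contOn_pow p p hp.le hp.le).mul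
      (Continuous.continuousOn (by fun_prop)))
  have hmono := intervalIntegral.integral_mono_on zero_le_one hint1 hint2 key
  -- beta identities
  have eB1 : eulerBeta (p+1) (p+3) = ∫ t in (0:ℝ)..1, t^p * (1-t)^(p+2) := by
    unfold eulerBeta
    congr 1
    funext t
    rw [show p+1-1 = p by ring, show p+3-1 = p+2 by ring]
  have eB2 : eulerBeta (p+2) (p+2) = ∫ t in (0:ℝ)..1, t^(p+1) * (1-t)^(p+1) := by
    unfold eulerBeta
    congr 1
    funext t
    rw [show p+2-1 = p+1 by ring]
  have hIc : (∫ t in (0:ℝ)..1, t^p * (1-t)^p * ((t^2 + (1-t)^2) * (f a ^ 2 + f b ^ 2) / 2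
        + 2 * (t * (1-t)) * (f a * f b)))
      = (f a ^ 2 + f b ^ 2) * eulerBeta (p+1) (p+3)
        + 2 * (f a * f b) * eulerBeta (p+2) (p+2) := by
    have hcongr : EqOn (fun t : ℝ => t^p * (1-t)^p * ((t^2 + (1-t)^2) * (f a ^ 2 + f b ^ 2) / 2
          + 2 * (t * (1-t)) * (f a * f b)))
        (fun t : ℝ => (f a ^ 2 + f b ^ 2) / 2 * (t^(p+2) * (1-t)^p)
          + ((f a ^ 2 + f b ^ 2) / 2 * (t^p * (1-t)^(p+2))
            + 2 * (f a * f b) * (t^(p+1) * (1-t)^(p+1)))) (uIcc (0:ℝ) 1) := by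
      intro t ht
      rw [uIcc_of_le zero_le_one] at ht
      have ht0 : (0:ℝ) ≤ t := ht.1
      have h1t : (0:ℝ) ≤ 1 - t := by linarith [ht.2]
      simp only
      rw [Real.rpow_add' ht0 (by positivity), Real.rpow_add' ht0 (by positivity),
          Real.rpow_add' h1t (by positivity), Real.rpow_add' h1t (by positivity),
          Real.rpow_two, Real.rpow_two, Real.rpow_one, Real.rpow_one]
      ring
    have iX : IntervalIntegrable
        (fun t : ℝ => (f a ^ 2 + f b ^ 2) / 2 * (t^(p+2) * (1-t)^p)) volume 0 1 :=
      (intble (p+2) p (by linarith) hp.le).const_mul _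
    have iY : IntervalIntegrable
        (fun t : ℝ => (f a ^ 2 + f b ^ 2) / 2 * (t^p * (1-t)^(p+2))) volume 0 1 :=
      (intble p (p+2) hp.le (by linarith)).const_mul _
    have iZ : IntervalIntegrable
        (fun t : ℝ => 2 * (f a * f b) * (t^(p+1) * (1-t)^(p+1))) volume 0 1 :=
      (intble (p+1) (p+1) (by linarith) (by linarith)).const_mul _
    rw [intervalIntegral.integral_congr hcongr,
        intervalIntegral.integral_add iX (iY.add iZ),
        intervalIntegral.integral_add iY iZ,
        intervalIntegral.integral_const_mul, intervalIntegral.integral_const_mul,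
        intervalIntegral.integral_const_mul, eB1, eB2, symm_int (p+2) p]
    ring
  calc (∫ x in a..b, G x)
      = (b - a) * ∫ t in (0:ℝ)..1, G ((b-a)*t + a) := hcov
    _ ≤ (b - a) * ∫ t in (0:ℝ)..1, Hc t := mul_le_mul_of_nonneg_left hmono hL.le
    _ = (b - a) ^ (2 * p + 1) *
        ((f a ^ 2 + f b ^ 2) * eulerBeta (p + 1) (p + 3) +
          2 * f a * f b * eulerBeta (p + 2) (p + 2)) := by
        simp only [hHc]
        rw [intervalIntegral.integral_const_mul, hIc,
          show 2*p + 1 = 2*p + (1:ℝ) by ring, Real.rpow_add hL, Real.rpow_one]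
        ring
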